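/- Let A be a commutative ring, M a group, and B an A-algebra that is free as an A-module. Then for all modules V and W over the group algebra A[M], the natural B-module map Hom_{A[M]}(V, W) ⊗_A B → Hom_{B[M]}(V ⊗_A B, W ⊗_A B), sending φ ⊗ b to the B[M]-linear map determined by v ⊗ b′ ↦ φ(v) ⊗ b·b′, is injective. -/

import Mathlib

open TensorProduct

section

variable {A : Type*} [CommRing A] {M : Type*} [Group M]
variable {B : Type*} [CommRing B] [Algebra A B]
variable {V : Type*} [AddCommGroup V] [Module A V] [Module (MonoidAlgebra A M) V]
  [IsScalarTower A (MonoidAlgebra A M) V]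

/-- The action of `m : M` on an `A[M]`-module as an `A`-linear endomorphism. -/
noncomputable def mAct (m : M) : V →ₗ[A] V where
  toFun v := MonoidAlgebra.of A M m • v
  map_add' _ _ := smul_add _ _ _
  map_smul' a v := smul_comm (MonoidAlgebra.of A M m) a v

lemma mAct_one : mAct (A := A) (M := M) (V := V) 1 = LinearMap.id := by
  ext v
  show MonoidAlgebra.of A M 1 • v = v
  rw [map_one, one_smul]

lemma mAct_mul (m n : M) :
    mAct (A := A) (M := M) (V := V) (m * n)
      = (mAct (A := A) (V := V) m) ∘ₗ (mAct (A := A) (V := V) n) := by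
  ext v
  show MonoidAlgebra.of A M (m * n) • v = MonoidAlgebra.of A M m • (MonoidAlgebra.of A M n • v)
  rw [map_mul, mul_smul]

/-- The base change to `B` of the `M`-action on `V`: the representation of `M` on
`V ⊗_A B = B ⊗[A] V` by `B`-linear endomorphisms, where `M` acts on the factor `V`. -/
noncomputable def bcRep : M →* Module.End B (B ⊗[A] V) where
  toFun m := LinearMap.baseChange B (mAct (A := A) (M := M) (V := V) m)
  map_one' := by
    show LinearMap.baseChange B (mAct (A := A) (M := M) (V := V) 1) = 1
    rw [mAct_one]
    exact LinearMap.baseChange_id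
  map_mul' m n := by
    show LinearMap.baseChange B (mAct (A := A) (M := M) (V := V) (m * n)) = _
    rw [mAct_mul]
    exact LinearMap.baseChange_comp _ _

/-- The `B[M]`-module structure on `V ⊗_A B = B ⊗[A] V` obtained by base change from
the `A[M]`-module `V`: `M` acts on the tensor factor `V` and `B` on the tensor
factor `B`. -/
noncomputable instance bcModule : Module (MonoidAlgebra B M) (B ⊗[A] V) :=
  Module.compHom (B ⊗[A] V)
    ((MonoidAlgebra.lift B (Module.End B (B ⊗[A] V)) M)
      (bcRep (A := A) (M := M) (B := B) (V := V))).toRingHom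

lemma bc_smul_def (s : MonoidAlgebra B M) (y : B ⊗[A] V) :
    s • y = ((MonoidAlgebra.lift B (Module.End B (B ⊗[A] V)) M)
      (bcRep (A := A) (M := M) (B := B) (V := V)) s) y := rfl

variable {W : Type*} [AddCommGroup W] [Module A W] [Module (MonoidAlgebra A M) W]
  [IsScalarTower A (MonoidAlgebra A M) W]

lemma restrict_comm (φ : V →ₗ[MonoidAlgebra A M] W) (m : M) :
    (LinearMap.restrictScalars A φ) ∘ₗ (mAct (A := A) (V := V) m)
      = (mAct (A := A) (V := W) m) ∘ₗ (LinearMap.restrictScalars A φ) := by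
  ext v
  show φ (MonoidAlgebra.of A M m • v) = MonoidAlgebra.of A M m • φ v
  exact map_smul φ _ v

lemma baseChange_equivariant (φ : V →ₗ[MonoidAlgebra A M] W)
    (s : MonoidAlgebra B M) (x : B ⊗[A] V) :
    LinearMap.baseChange B (LinearMap.restrictScalars A φ) (s • x)
      = s • (LinearMap.baseChange B (LinearMap.restrictScalars A φ) x) := by
  rw [bc_smul_def, bc_smul_def]
  induction s using MonoidAlgebra.induction_on with
  | of m =>
      rw [MonoidAlgebra.lift_of, MonoidAlgebra.lift_of]
      show (LinearMap.baseChange B (LinearMap.restrictScalars A φ) ∘ₗ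
        LinearMap.baseChange B (mAct (A := A) (V := V) m)) x
        = (LinearMap.baseChange B (mAct (A := A) (V := W) m) ∘ₗ
          LinearMap.baseChange B (LinearMap.restrictScalars A φ)) x
      rw [← LinearMap.baseChange_comp, ← LinearMap.baseChange_comp, restrict_comm]
  | add f g hf hg =>
      rw [map_add, map_add, LinearMap.add_apply, LinearMap.add_apply, map_add, hf, hg]
  | smul r f hf =>
      rw [map_smul, map_smul, LinearMap.smul_apply, LinearMap.smul_apply, map_smul, hf]

/-- `φ ⊗ b` induces a `B[M]`-linear map `V ⊗_A B → W ⊗_A B`, determined by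
`v ⊗ b' ↦ φ(v) ⊗ b·b'`. -/
noncomputable def pairMap (φ : V →ₗ[MonoidAlgebra A M] W) (b : B) :
    (B ⊗[A] V) →ₗ[MonoidAlgebra B M] (B ⊗[A] W) where
  toFun x := b • (LinearMap.baseChange B (LinearMap.restrictScalars A φ) x)
  map_add' x y := by
    show b • _ = b • _ + b • _
    rw [map_add, smul_add]
  map_smul' s x := by
    simp only [RingHom.id_apply]
    rw [baseChange_equivariant, bc_smul_def, bc_smul_def, map_smul]

lemma pairMap_apply (φ : V →ₗ[MonoidAlgebra A M] W) (b : B) (x : B ⊗[A] V) :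
    pairMap φ b x = b • (LinearMap.baseChange B (LinearMap.restrictScalars A φ) x) := rfl

/-- The natural map `Hom_{A[M]}(V, W) ⊗_A B → Hom_{B[M]}(V ⊗_A B, W ⊗_A B)` sending
`φ ⊗ b` to the `B[M]`-linear map determined by `v ⊗ b' ↦ φ(v) ⊗ b·b'`. -/
noncomputable def natBaseChangeHom :
    ((V →ₗ[MonoidAlgebra A M] W) ⊗[A] B) →+
      ((B ⊗[A] V) →ₗ[MonoidAlgebra B M] (B ⊗[A] W)) :=
  TensorProduct.liftAddHom
    { toFun := fun φ =>
        { toFun := fun b => pairMap φ b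
          map_zero' := LinearMap.ext fun x => by
            rw [pairMap_apply, zero_smul]; rfl
          map_add' := fun b b' => LinearMap.ext fun x => by
            rw [pairMap_apply, add_smul]; rfl }
      map_zero' := AddMonoidHom.ext fun b => LinearMap.ext fun x => by
        show pairMap 0 b x = 0
        rw [pairMap_apply, LinearMap.restrictScalars_zero]
        simp
      map_add' := fun φ ψ => AddMonoidHom.ext fun b => LinearMap.ext fun x => by
        show pairMap (φ + ψ) b x = pairMap φ b x + pairMap ψ b x
        rw [pairMap_apply, pairMap_apply, pairMap_apply,
          LinearMap.restrictScalars_add, LinearMap.baseChange_add]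
        rw [LinearMap.add_apply, smul_add] }
    (fun a φ b => LinearMap.ext fun x => by
      show pairMap (a • φ) b x = pairMap φ (a • b) x
      rw [pairMap_apply, pairMap_apply, LinearMap.restrictScalars_smul,
        LinearMap.baseChange_smul, LinearMap.smul_apply, smul_comm b a, smul_assoc])


/-- The injectivity assertion in the proof of Proposition 2.5: if `B` is an `A`-algebra
that is free as an `A`-module, then for all `A[M]`-modules `V` and `W` the natural map
`Hom_{A[M]}(V, W) ⊗_A B → Hom_{B[M]}(V ⊗_A B, W ⊗_A B)`, sending `φ ⊗ b` to the
`B[M]`-linear map determined by `v ⊗ b' ↦ φ(v) ⊗ b·b'`, is injective. -/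
theorem natBaseChangeHom_injective [Module.Free A B] :
    Function.Injective
      ⇑(natBaseChangeHom (A := A) (M := M) (B := B) (V := V) (W := W)) := by
  classical
  obtain ⟨ι, b⟩ := Module.Free.exists_basis (R := A) (M := B)
  let e1 : (V →ₗ[MonoidAlgebra A M] W) ⊗[A] B ≃ₗ[A] (ι →₀ (V →ₗ[MonoidAlgebra A M] W)) :=
    (TensorProduct.congr (LinearEquiv.refl A (V →ₗ[MonoidAlgebra A M] W)) b.repr) ≪≫ₗ
      TensorProduct.finsuppScalarRight A A (V →ₗ[MonoidAlgebra A M] W) ι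
  let e2 : B ⊗[A] W ≃ₗ[A] (ι →₀ W) :=
    (TensorProduct.congr b.repr (LinearEquiv.refl A W)) ≪≫ₗ
      TensorProduct.finsuppScalarLeft A W ι
  have key : ∀ (x : (V →ₗ[MonoidAlgebra A M] W) ⊗[A] B) (i : ι) (v : V),
      (e1 x i) v = e2 ((natBaseChangeHom x) ((1 : B) ⊗ₜ[A] v)) i := by
    intro x i v
    induction x using TensorProduct.induction_on with
    | zero => simp only [map_zero, Finsupp.coe_zero, Pi.zero_apply, LinearMap.zero_apply]
    | tmul φ c =>
        have h1 : natBaseChangeHom (A := A) (M := M) (B := B) (V := V) (W := W) (φ ⊗ₜ[A] c)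
            = pairMap φ c := by
          simp [natBaseChangeHom]
        rw [h1, pairMap_apply, LinearMap.baseChange_tmul]
        have hsm : c • ((1 : B) ⊗ₜ[A] ((LinearMap.restrictScalars A φ) v))
            = c ⊗ₜ[A] (φ v) := by
          rw [TensorProduct.smul_tmul', smul_eq_mul, mul_one]; rfl
        rw [hsm]
        simp only [e1, e2, LinearEquiv.trans_apply, TensorProduct.congr_tmul,
          LinearEquiv.refl_apply, TensorProduct.finsuppScalarRight_apply_tmul_apply,
          TensorProduct.finsuppScalarLeft_apply_tmul_apply, LinearMap.smul_apply]
    | add y z hy hz =>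
        simp only [map_add, Finsupp.add_apply, LinearMap.add_apply, hy, hz]
  rw [injective_iff_map_eq_zero]
  intro x hx
  rw [← e1.map_eq_zero_iff]
  ext i v
  rw [key, hx]
  simp

end
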